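/- Let g : [a,b] → E be right regulated with values in a Banach space, let ε > 0, and let Λ be a well-ordered subset of [a,b] with min Λ = a, max Λ = b, such that [a,b) is the disjoint union of [β, S(β)), β ∈ Λ \ {b}, and ‖g(s) − g(t)‖ ≤ ε for all s,t ∈ (β, S(β)). Define g_ε : [a,b] → E by g_ε(t) = lim_{s→β⁺} g(s) for t ∈ [β, S(β)), and g_ε(b) = g(b). Then ‖g_ε(t) − g(t)‖ ≤ ε for every t ∈ [a,b) that is not an element of Λ, and consequently g_ε − g is bounded on [a,b] outside the countable set Λ, hence Bochner integrable on [a,b]. -/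

import Mathlib

open MeasureTheory

/-- Any function from a countable measurable space with measurable singletons into a
normed group is strongly measurable. -/
lemma sm_of_countable_dom {ι E : Type*} [Countable ι] [MeasurableSpace ι]
    [MeasurableSingletonClass ι] [NormedAddCommGroup E] (f : ι → E) :
    StronglyMeasurable f := by
  borelize E
  exact stronglyMeasurable_iff_measurable_separable.2
    ⟨measurable_of_countable f, (Set.countable_range f).isSeparable⟩

/-- The dyadic right approximation points tend to `t` from the right. -/
lemma dyadic_tendsto_right (t : ℝ) :
    Filter.Tendsto (fun n : ℕ => (((⌊t * 2^n⌋ : ℤ) : ℝ) + 1) / 2^n)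
      Filter.atTop (nhdsWithin t (Set.Ioi t)) := by
  rw [tendsto_nhdsWithin_iff]
  constructor
  · apply tendsto_of_tendsto_of_tendsto_of_le_of_le (g := fun _ : ℕ => t)
      (h := fun n : ℕ => t + ((2:ℝ)^n)⁻¹) tendsto_const_nhds
    · simpa using tendsto_const_nhds.add
        (tendsto_inv_atTop_zero.comp (tendsto_pow_atTop_atTop_of_one_lt (α := ℝ) one_lt_two))
    · intro n
      have h2 : (0:ℝ) < 2^n := by positivity
      rw [le_div_iff₀ h2]
      nlinarith [Int.lt_floor_add_one (t * 2^n)]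
    · intro n
      have h2 : (0:ℝ) < 2^n := by positivity
      rw [div_le_iff₀ h2, add_mul, inv_mul_cancel₀ h2.ne']
      have := Int.floor_le (t * 2^n)
      linarith
  · apply Filter.Eventually.of_forall
    intro n
    have h2 : (0:ℝ) < 2^n := by positivity
    rw [Set.mem_Ioi, lt_div_iff₀ h2]
    have := Int.lt_floor_add_one (t * 2^n)
    linarith

/-- A set of reals, each point of which is isolated from the right within the set,
is countable. -/
lemma countable_of_right_isolated {D : Set ℝ}
    (h : ∀ t ∈ D, ∃ q : ℚ, t < (q : ℝ) ∧ ∀ t' ∈ D, t < t' → (q : ℝ) ≤ t') :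
    D.Countable := by
  rw [← Set.countable_coe_iff]
  choose q hq1 hq2 using h
  have hinj : Function.Injective (fun x : D => q x.1 x.2) := by
    rintro ⟨x, hx⟩ ⟨y, hy⟩ hxy
    simp only at hxy
    ext
    rcases lt_trichotomy x y with h1 | h1 | h1
    · exfalso
      have h2 := hq2 x hx y hy h1
      have h3 := hq1 y hy
      rw [hxy] at h2
      exact absurd h2 (not_le.2 h3)
    · exact h1
    · exfalso
      have h2 := hq2 y hy x hx h1
      have h3 := hq1 x hx
      rw [← hxy] at h2
      exact absurd h2 (not_le.2 h3)
  exact hinj.countable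

/-- Given a right regulated `g : [a,b] → E` and a well-ordered decomposition of
`[a,b)` into intervals `[β, S β)` on which the oscillation of `g` is at most
`ε`, the step mapping `g_ε` built from the right limits of `g` satisfies
`‖g_ε t − g t‖ ≤ ε` off `Λ`, and `g_ε − g` is Bochner integrable on `[a,b]`. -/
theorem step_approximation_bochner {E : Type*}
    [NormedAddCommGroup E] [NormedSpace ℝ E] [CompleteSpace E]
    (a b : ℝ) (hab : a < b) (g : ℝ → E)
    (hg : ∀ x ∈ Set.Ico a b, ∃ L : E,
      Filter.Tendsto g (nhdsWithin x (Set.Ioi x)) (nhds L))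
    (ε : ℝ) (hε : 0 < ε)
    (Λ : Set ℝ) (hΛ : Λ ⊆ Set.Icc a b)
    (hwo : ∀ s : Set ℝ, s ⊆ Λ → s.Nonempty → ∃ m ∈ s, ∀ x ∈ s, m ≤ x)
    (ha : a ∈ Λ) (hb : b ∈ Λ) (hmin : ∀ x ∈ Λ, a ≤ x) (hmax : ∀ x ∈ Λ, x ≤ b)
    (S : ℝ → ℝ)
    (hS : ∀ β ∈ Λ \ {b}, S β ∈ Λ ∧ β < S β ∧ ∀ x ∈ Λ, β < x → S β ≤ x)
    (hunion : Set.Ico a b = ⋃ β ∈ Λ \ {b}, Set.Ico β (S β))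
    (hdisj : Set.PairwiseDisjoint (Λ \ {b}) (fun β => Set.Ico β (S β)))
    (hosc : ∀ β ∈ Λ \ {b}, ∀ s ∈ Set.Ioo β (S β), ∀ t ∈ Set.Ioo β (S β),
      ‖g s - g t‖ ≤ ε)
    (L : ℝ → E)
    (hL : ∀ β ∈ Λ \ {b},
      Filter.Tendsto g (nhdsWithin β (Set.Ioi β)) (nhds (L β)))
    (gε : ℝ → E)
    (hgε : ∀ β ∈ Λ \ {b}, ∀ t ∈ Set.Ico β (S β), gε t = L β)
    (hgεb : gε b = g b) :
    (∀ t ∈ Set.Ico a b, t ∉ Λ → ‖gε t - g t‖ ≤ ε) ∧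
      IntegrableOn (fun t => gε t - g t) (Set.Icc a b) := by
  classical
  -- locate the interval containing a point of `[a,b)`
  have hloc : ∀ t ∈ Set.Ico a b, ∃ β ∈ Λ \ {b}, t ∈ Set.Ico β (S β) := by
    intro t ht
    have h2 : t ∈ ⋃ β ∈ Λ \ {b}, Set.Ico β (S β) := hunion ▸ ht
    simp only [Set.mem_iUnion, exists_prop] at h2
    exact ⟨h2.choose, h2.choose_spec.1, h2.choose_spec.2⟩
  -- Part 1
  have part1 : ∀ t ∈ Set.Ico a b, t ∉ Λ → ‖gε t - g t‖ ≤ ε := by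
    intro t ht htΛ
    obtain ⟨β, hβ, htβ⟩ := hloc t ht
    have hβlt : β < S β := (hS β hβ).2.1
    have htne : t ≠ β := fun h => htΛ (h ▸ hβ.1)
    have htIoo : t ∈ Set.Ioo β (S β) := ⟨lt_of_le_of_ne htβ.1 (Ne.symm htne), htβ.2⟩
    rw [hgε β hβ t htβ]
    have htend : Filter.Tendsto (fun s => ‖g s - g t‖)
        (nhdsWithin β (Set.Ioi β)) (nhds ‖L β - g t‖) :=
      ((hL β hβ).sub tendsto_const_nhds).norm
    refine le_of_tendsto htend ?_
    filter_upwards [Ioo_mem_nhdsGT hβlt] with s hs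
    exact hosc β hβ s hs t htIoo
  refine ⟨part1, ?_⟩
  borelize E
  -- Λ is countable
  have hTc : (Λ \ {b}).Countable := by
    apply Set.PairwiseDisjoint.countable_of_Ioo (y := S)
    · exact hdisj.mono fun β => Set.Ioo_subset_Ico_self
    · exact fun β hβ => (hS β hβ).2.1
  have hΛc : Λ.Countable := by
    have : Λ ⊆ (Λ \ {b}) ∪ {b} := by
      intro x hx
      by_cases hxb : x = b
      · exact Or.inr hxb
      · exact Or.inl ⟨hx, hxb⟩
    exact ((hTc.union (Set.countable_singleton b)).mono this)
  -- the right-limit function R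
  set R : ℝ → E := fun t => if h : t ∈ Set.Ico a b then (hg t h).choose else g b with hRdef
  have hR : ∀ t (h : t ∈ Set.Ico a b),
      Filter.Tendsto g (nhdsWithin t (Set.Ioi t)) (nhds (R t)) := by
    intro t h
    simp only [hRdef, dif_pos h]
    exact (hg t h).choose_spec
  have hRb : R b = g b := by
    have hbn : b ∉ Set.Ico a b := fun h => lt_irrefl b h.2
    simp only [hRdef, dif_neg hbn]
  -- R is strongly measurable
  have hRsm : StronglyMeasurable R := by
    set rn : ℕ → ℝ → E := fun n =>
      (Set.Ico a b).piecewise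
        (fun t => (fun k : ℤ => g (((k : ℝ) + 1) / 2^n)) ⌊t * 2^n⌋) (fun _ => g b) with hrn
    have hsm : ∀ n, StronglyMeasurable (rn n) := by
      intro n
      apply StronglyMeasurable.piecewise measurableSet_Ico _ stronglyMeasurable_const
      exact (sm_of_countable_dom (fun k : ℤ => g (((k : ℝ) + 1) / 2^n))).comp_measurable
        (Int.measurable_floor.comp (measurable_id.mul_const _))
    apply stronglyMeasurable_of_tendsto Filter.atTop hsm
    rw [tendsto_pi_nhds]
    intro t
    by_cases h : t ∈ Set.Ico a b
    · have heq : ∀ n, rn n t = g ((((⌊t * 2^n⌋ : ℤ) : ℝ) + 1) / 2^n) := fun n =>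
        Set.piecewise_eq_of_mem _ _ _ h
      have := (hR t h).comp (dyadic_tendsto_right t)
      refine this.congr fun n => (heq n).symm
    · have heq : ∀ n, rn n t = g b := fun n => Set.piecewise_eq_of_notMem _ _ _ h
      have hRt : R t = g b := by simp only [hRdef, dif_neg h]
      rw [hRt]
      exact tendsto_const_nhds.congr fun n => (heq n).symm
  -- the set of right discontinuities is countable
  have hDnc : ∀ c : ℝ, 0 < c → Set.Countable {t | t ∈ Set.Ico a b ∧ c < ‖g t - R t‖} := by
    intro c hc
    set Dn := {t | t ∈ Set.Ico a b ∧ c < ‖g t - R t‖} with hDn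
    apply countable_of_right_isolated
    intro t ht
    have h0' : Filter.Tendsto (fun s => ‖g s - R t‖)
        (nhdsWithin t (Set.Ioi t)) (nhds ‖R t - R t‖) :=
      ((hR t ht.1).sub (tendsto_const_nhds (x := R t))).norm
    have h0 : Filter.Tendsto (fun s => ‖g s - R t‖)
        (nhdsWithin t (Set.Ioi t)) (nhds 0) := by
      simpa using h0'
    have h2 : ∀ᶠ s in nhdsWithin t (Set.Ioi t), ‖g s - R t‖ < c / 2 :=
      h0.eventually_lt_const (by linarith)
    obtain ⟨u, hu, hsub⟩ := mem_nhdsGT_iff_exists_Ioo_subset.1 h2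
    obtain ⟨q, hq1, hq2⟩ := exists_rat_btwn (Set.mem_Ioi.1 hu)
    refine ⟨q, hq1, ?_⟩
    intro t' ht' htt'
    by_contra hlt
    push_neg at hlt
    have ht'u : t' ∈ Set.Ioo t u := ⟨htt', hlt.trans hq2⟩
    have h3 : ‖g t' - R t‖ < c / 2 := hsub ht'u
    have h4 : ‖R t' - R t‖ ≤ c / 2 := by
      refine le_of_tendsto (((hR t' ht'.1).sub tendsto_const_nhds).norm) ?_
      filter_upwards [Ioo_mem_nhdsGT_of_mem (Set.mem_Ico.2 ⟨le_refl t', ht'u.2⟩)] with s hs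
      exact le_of_lt (hsub ⟨htt'.trans hs.1, hs.2⟩)
    have h5 : ‖g t' - R t'‖ ≤ ‖g t' - R t‖ + ‖R t' - R t‖ := by
      have := norm_sub_le (g t' - R t) (R t' - R t)
      simpa [sub_sub_sub_cancel_right] using this
    have h6 := ht'.2
    linarith
  have hDc : Set.Countable {t | t ∈ Set.Ico a b ∧ g t ≠ R t} := by
    have hsub : {t | t ∈ Set.Ico a b ∧ g t ≠ R t} ⊆
        ⋃ n : ℕ, {t | t ∈ Set.Ico a b ∧ 1 / (n + 1 : ℝ) < ‖g t - R t‖} := by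
      intro t ht
      have hpos : 0 < ‖g t - R t‖ := by
        rw [norm_pos_iff, sub_ne_zero]
        exact ht.2
      obtain ⟨n, hn⟩ := exists_nat_one_div_lt hpos
      exact Set.mem_iUnion.2 ⟨n, ht.1, hn⟩
    exact (Set.countable_iUnion fun n => hDnc _ (by positivity)).mono hsub
  -- the step function F
  have hane : a ∈ Λ \ {b} := ⟨ha, fun h => absurd h (ne_of_lt hab)⟩
  obtain ⟨e, he⟩ := hTc.exists_eq_range ⟨a, hane⟩
  set u : ℝ → ℕ := fun t => if h : ∃ i, t ∈ Set.Ico (e i) (S (e i)) then Nat.find h else 0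
    with hudef
  set F : ℝ → E := (Set.Ico a b).piecewise (fun t => (fun i => L (e i)) (u t)) (fun _ => g b)
    with hFdef
  have hFgε : ∀ t ∈ Set.Icc a b, F t = gε t := by
    intro t ht
    by_cases h : t ∈ Set.Ico a b
    · rw [hFdef, Set.piecewise_eq_of_mem _ _ _ h]
      obtain ⟨β, hβ, htβ⟩ := hloc t h
      have hβr : β ∈ Set.range e := he ▸ hβ
      obtain ⟨i, hi⟩ := hβr
      have hex : ∃ i, t ∈ Set.Ico (e i) (S (e i)) := ⟨i, hi.symm ▸ htβ⟩
      simp only [hudef, dif_pos hex]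
      have hj : t ∈ Set.Ico (e (Nat.find hex)) (S (e (Nat.find hex))) := Nat.find_spec hex
      have hej : e (Nat.find hex) ∈ Λ \ {b} := he ▸ Set.mem_range_self _
      have heqβ : e (Nat.find hex) = β := by
        by_contra hne'
        exact Set.disjoint_left.1 (hdisj hej hβ hne') hj htβ
      rw [heqβ, hgε β hβ t htβ]
    · have htb : t = b := le_antisymm ht.2 (not_lt.1 fun hlt => h ⟨ht.1, hlt⟩)
      rw [hFdef, Set.piecewise_eq_of_notMem _ _ _ h, htb, hgεb]
  have hFsm : StronglyMeasurable F := by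
    apply StronglyMeasurable.piecewise measurableSet_Ico _ stronglyMeasurable_const
    apply (sm_of_countable_dom (fun i : ℕ => L (e i))).comp_measurable
    apply measurable_to_countable'
    intro j
    have heq : u ⁻¹' {j} =
        (Set.Ico (e j) (S (e j)) ∩ ⋂ i ∈ Set.Iio j, (Set.Ico (e i) (S (e i)))ᶜ) ∪
          (if j = 0 then (⋃ i, Set.Ico (e i) (S (e i)))ᶜ else ∅) := by
      ext t
      simp only [Set.mem_preimage, Set.mem_singleton_iff, hudef]
      by_cases h : ∃ i, t ∈ Set.Ico (e i) (S (e i))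
      · rw [dif_pos h]
        constructor
        · intro hfind
          left
          rw [Nat.find_eq_iff h] at hfind
          refine ⟨hfind.1, ?_⟩
          simp only [Set.mem_iInter, Set.mem_compl_iff, Set.mem_Iio]
          exact fun i hi => hfind.2 i hi
        · rintro (⟨h1, h2⟩ | h2)
          · rw [Nat.find_eq_iff h]
            refine ⟨h1, ?_⟩
            simp only [Set.mem_iInter, Set.mem_compl_iff, Set.mem_Iio] at h2
            exact fun i hi => h2 i hi
          · exfalso
            by_cases hj : j = 0
            · rw [if_pos hj] at h2
              exact h2 (Set.mem_iUnion.2 h)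
            · rw [if_neg hj] at h2
              exact h2
      · rw [dif_neg h]
        constructor
        · intro h0
          right
          rw [if_pos h0.symm]
          simp only [Set.mem_compl_iff, Set.mem_iUnion]
          exact h
        · rintro (⟨h1, _⟩ | h2)
          · exact absurd ⟨j, h1⟩ h
          · by_cases hj : j = 0
            · exact hj.symm
            · rw [if_neg hj] at h2
              exact absurd h2 (Set.notMem_empty t)
    rw [heq]
    apply MeasurableSet.union
    · exact measurableSet_Ico.inter
        (MeasurableSet.biInter (Set.to_countable _)
          fun i _ => measurableSet_Ico.compl)
    · split_ifs
      · exact (MeasurableSet.iUnion fun i => measurableSet_Ico).compl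
      · exact MeasurableSet.empty
  -- a.e. facts on the restricted measure
  have hDnull : (volume : Measure ℝ) {t | t ∈ Set.Ico a b ∧ g t ≠ R t} = 0 :=
    hDc.measure_zero _
  have hΛnull : (volume : Measure ℝ) Λ = 0 := hΛc.measure_zero _
  have haeD : ∀ᵐ t ∂(volume.restrict (Set.Icc a b)),
      t ∉ {t | t ∈ Set.Ico a b ∧ g t ≠ R t} := by
    exact ae_restrict_of_ae (Set.Countable.ae_notMem hDc _)
  have haeΛ : ∀ᵐ t ∂(volume.restrict (Set.Icc a b)), t ∉ Λ :=
    ae_restrict_of_ae (Set.Countable.ae_notMem hΛc _)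
  have haeIcc : ∀ᵐ t ∂(volume.restrict (Set.Icc a b)), t ∈ Set.Icc a b :=
    ae_restrict_mem measurableSet_Icc
  -- a.e. strong measurability
  have haesm : AEStronglyMeasurable (fun t => gε t - g t)
      (volume.restrict (Set.Icc a b)) := by
    refine ⟨fun t => F t - R t, hFsm.sub hRsm, ?_⟩
    filter_upwards [haeD, haeIcc] with t ht1 ht2
    have hgR : g t = R t := by
      by_cases h : t ∈ Set.Ico a b
      · by_contra hne'
        exact ht1 ⟨h, hne'⟩
      · have htb : t = b := le_antisymm ht2.2 (not_lt.1 fun hlt => h ⟨ht2.1, hlt⟩)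
        rw [htb, hRb]
    rw [hFgε t ht2, hgR]
  -- a.e. bound
  have hbound : ∀ᵐ t ∂(volume.restrict (Set.Icc a b)), ‖gε t - g t‖ ≤ ε := by
    filter_upwards [haeΛ, haeIcc] with t ht1 ht2
    by_cases h : t ∈ Set.Ico a b
    · exact part1 t h ht1
    · have htb : t = b := le_antisymm ht2.2 (not_lt.1 fun hlt => h ⟨ht2.1, hlt⟩)
      rw [htb, hgεb]
      simpa using hε.le
  exact Integrable.mono' (integrableOn_const measure_Icc_lt_top.ne) haesm hbound
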